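/- Let k ≥ 1, let δ be an integer with 0 < δ < 2^k, and let M, N be integers with 0 ≤ M < N. Then ν₂( C(N·2^k, M·2^k + δ) ) > ν₂( C(N·2^k, M·2^k) ). -/

import Mathlib

private lemma ds_rec (n : ℕ) :
    (Nat.digits 2 n).sum = n % 2 + (Nat.digits 2 (n / 2)).sum := by
  rcases Nat.eq_zero_or_pos n with rfl | hn
  · simp
  · rw [Nat.digits_def' (by norm_num) hn, List.sum_cons]

private lemma ds_pos : ∀ n : ℕ, 0 < n → 0 < (Nat.digits 2 n).sum := by
  intro n
  induction n using Nat.strong_induction_on with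
  | _ n ih =>
    intro hn
    rw [ds_rec]
    rcases Nat.eq_zero_or_pos (n % 2) with h | h
    · have h2 : 0 < n / 2 := by omega
      have := ih (n / 2) (by omega) h2
      omega
    · omega

private lemma ds_subadd_aux : ∀ s m n c : ℕ, m + n + c ≤ s → c ≤ 1 →
    (Nat.digits 2 (m + n + c)).sum ≤ (Nat.digits 2 m).sum + (Nat.digits 2 n).sum + c := by
  intro s
  induction s with
  | zero =>
    intro m n c h hc
    have hm : m = 0 := by omega
    have hn : n = 0 := by omega
    have hcc : c = 0 := by omega
    subst hm; subst hn; subst hcc; simp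
  | succ s ih =>
    intro m n c h hc
    rcases Nat.eq_zero_or_pos (m + n + c) with h0 | h0
    · have hm : m = 0 := by omega
      have hn : n = 0 := by omega
      have hcc : c = 0 := by omega
      subst hm; subst hn; subst hcc; simp
    · rw [ds_rec (m + n + c), ds_rec m, ds_rec n]
      set c' := (m % 2 + n % 2 + c) / 2 with hc'
      have hc'le : c' ≤ 1 := by omega
      have hdiv : (m + n + c) / 2 = m / 2 + n / 2 + c' := by omega
      have hmod : (m + n + c) % 2 + 2 * c' = m % 2 + n % 2 + c := by omega
      rw [hdiv]
      have hle : m / 2 + n / 2 + c' ≤ s := by omega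
      have := ih (m / 2) (n / 2) c' hle hc'le
      omega

private lemma ds_subadd (m n : ℕ) :
    (Nat.digits 2 (m + n)).sum ≤ (Nat.digits 2 m).sum + (Nat.digits 2 n).sum := by
  have := ds_subadd_aux (m + n) m n 0 (by omega) (by omega)
  simpa using this

/-- Splitting digits: for `δ < 2^k`, `s(a·2^k + δ) = s(a) + s(δ)`. -/
private lemma ds_split (k a δ : ℕ) (hδ : δ < 2 ^ k) :
    (Nat.digits 2 (a * 2 ^ k + δ)).sum = (Nat.digits 2 a).sum + (Nat.digits 2 δ).sum := by
  rcases Nat.eq_zero_or_pos a with rfl | ha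
  · simp
  · have hlen : (Nat.digits 2 δ).length ≤ k := by
      rcases Nat.eq_zero_or_pos δ with rfl | hδ0
      · simp
      · rw [Nat.digits_len 2 δ (by norm_num) (by omega)]
        have := Nat.log_lt_of_lt_pow (by omega : δ ≠ 0) hδ
        omega
    have hkey : a * 2 ^ k + δ = δ + 2 ^ ((Nat.digits 2 δ).length + (k - (Nat.digits 2 δ).length)) * a := by
      rw [show (Nat.digits 2 δ).length + (k - (Nat.digits 2 δ).length) = k by omega]
      ring
    rw [hkey, ← Nat.digits_append_zeroes_append_digits (by norm_num) ha]
    simp [List.sum_append, add_comm]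

theorem stmt2 (k : ℕ) (hk : 1 ≤ k) (δ : ℕ) (hδ1 : 0 < δ) (hδ2 : δ < 2 ^ k)
    (M N : ℕ) (hMN : M < N) :
    padicValNat 2 (Nat.choose (N * 2 ^ k) (M * 2 ^ k)) <
      padicValNat 2 (Nat.choose (N * 2 ^ k) (M * 2 ^ k + δ)) := by
  haveI : Fact (Nat.Prime 2) := ⟨Nat.prime_two⟩
  have hpow : 0 < 2 ^ k := Nat.pow_pos (by norm_num)
  have h1 : M * 2 ^ k ≤ N * 2 ^ k := Nat.mul_le_mul_right _ (le_of_lt hMN)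
  have h2 : M * 2 ^ k + δ ≤ N * 2 ^ k := by
    have : (M + 1) * 2 ^ k ≤ N * 2 ^ k := Nat.mul_le_mul_right _ (by omega)
    nlinarith
  have f1 := sub_one_mul_padicValNat_choose_eq_sub_sum_digits (p := 2) h1
  have f2 := sub_one_mul_padicValNat_choose_eq_sub_sum_digits (p := 2) h2
  norm_num at f1 f2
  -- rewrite the subtractions
  have e1 : N * 2 ^ k - M * 2 ^ k = (N - M) * 2 ^ k := by
    rw [Nat.sub_mul]
  have e2 : N * 2 ^ k - (M * 2 ^ k + δ) = (N - M - 1) * 2 ^ k + (2 ^ k - δ) := by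
    have hr : 2 ^ k ≤ (N - M) * 2 ^ k := Nat.le_mul_of_pos_left _ (by omega)
    have hmm : (N - M - 1) * 2 ^ k = (N - M) * 2 ^ k - 1 * 2 ^ k := by
      rw [← Nat.sub_mul]
    omega
  rw [e1] at f1
  rw [e2] at f2
  -- digit sum computations
  have s1 : (Nat.digits 2 (M * 2 ^ k)).sum = (Nat.digits 2 M).sum := by
    have := ds_split k M 0 hpow
    simpa using this
  have s2 : (Nat.digits 2 ((N - M) * 2 ^ k)).sum = (Nat.digits 2 (N - M)).sum := by
    have := ds_split k (N - M) 0 hpow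
    simpa using this
  have s3 : (Nat.digits 2 (N * 2 ^ k)).sum = (Nat.digits 2 N).sum := by
    have := ds_split k N 0 hpow
    simpa using this
  have s4 : (Nat.digits 2 (M * 2 ^ k + δ)).sum
      = (Nat.digits 2 M).sum + (Nat.digits 2 δ).sum := ds_split k M δ hδ2
  have s5 : (Nat.digits 2 ((N - M - 1) * 2 ^ k + (2 ^ k - δ))).sum
      = (Nat.digits 2 (N - M - 1)).sum + (Nat.digits 2 (2 ^ k - δ)).sum :=
    ds_split k (N - M - 1) (2 ^ k - δ) (by omega)
  rw [s1, s2, s3] at f1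
  rw [s4, s5, s3] at f2
  -- key inequalities
  have hA : (Nat.digits 2 N).sum ≤ (Nat.digits 2 M).sum + (Nat.digits 2 (N - M)).sum := by
    have := ds_subadd M (N - M)
    rw [show M + (N - M) = N by omega] at this
    exact this
  have hB : (Nat.digits 2 (N - M)).sum ≤ (Nat.digits 2 (N - M - 1)).sum + 1 := by
    have := ds_subadd (N - M - 1) 1
    rw [show N - M - 1 + 1 = N - M by omega] at this
    simpa using this
  have hd1 : 0 < (Nat.digits 2 δ).sum := ds_pos δ hδ1
  have hd2 : 0 < (Nat.digits 2 (2 ^ k - δ)).sum := ds_pos _ (by omega)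
  omega
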